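/- Let A be an invertible n×n real matrix and let ξ ∈ ℝⁿ be a nonzero eigenvector of the forward Cauchy–Green tensor C^f = Aᵀ A corresponding to its smallest eigenvalue λ_min. Then there exists a nonzero eigenvector η of the backward Cauchy–Green tensor C^b = (A⁻¹)ᵀ A⁻¹ corresponding to its largest eigenvalue such that A((span ξ)^⊥) = (span η)^⊥. (Pointwise tangent-space version of Theorem 1(ii): a forward stretch-surface is a backward strain-surface.) -/

import Mathlib

open Matrix

section Aux

variable {n : ℕ}

private lemma dot_self_pos {v : Fin n → ℝ} (hv : v ≠ 0) : 0 < v ⬝ᵥ v := by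
  have := Matrix.dotProduct_self_star_pos_iff (v := v).2 hv
  simpa using this

private lemma toEL_mul (M N : Matrix (Fin n) (Fin n) ℝ) (v : EuclideanSpace ℝ (Fin n)) :
    Matrix.toEuclideanLin (M * N) v = Matrix.toEuclideanLin M (Matrix.toEuclideanLin N v) := by
  simp [Matrix.toEuclideanLin_apply, Matrix.mulVec_mulVec]

private lemma toEL_eq_mulVec (M : Matrix (Fin n) (Fin n) ℝ) (v : EuclideanSpace ℝ (Fin n)) :
    (Matrix.toEuclideanLin M v : Fin n → ℝ) = M *ᵥ (v : Fin n → ℝ) := by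
  simp [Matrix.toEuclideanLin_apply]

/-- eigenpair transfer: from `BᵀB` to `(B⁻¹)ᵀB⁻¹`. -/
private lemma key (B : Matrix (Fin n) (Fin n) ℝ) (hB : IsUnit B.det) (l : ℝ)
    (x : Fin n → ℝ) (hx : x ≠ 0) (h : (Bᵀ * B) *ᵥ x = l • x) :
    0 < l ∧ B *ᵥ x ≠ 0 ∧ ((B⁻¹)ᵀ * B⁻¹) *ᵥ (B *ᵥ x) = l⁻¹ • (B *ᵥ x) := by
  have hinj : Function.Injective (B.mulVec) := Matrix.mulVec_injective_iff_isUnit.2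
    (Matrix.isUnit_iff_isUnit_det B |>.2 hB)
  have hBx : B *ᵥ x ≠ 0 := by
    intro h0
    exact hx (hinj (by simpa using h0))
  have hdot : l * (x ⬝ᵥ x) = (B *ᵥ x) ⬝ᵥ (B *ᵥ x) := by
    have h1 := congrArg (fun v => v ⬝ᵥ x) h
    simp only [smul_dotProduct, smul_eq_mul, ← Matrix.mulVec_mulVec] at h1
    rw [← h1, dotProduct_comm, Matrix.dotProduct_mulVec, Matrix.vecMul_transpose]
  have hl : 0 < l := by
    have h1 : 0 < x ⬝ᵥ x := dot_self_pos hx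
    have h2 : 0 < (B *ᵥ x) ⬝ᵥ (B *ᵥ x) := dot_self_pos hBx
    nlinarith
  refine ⟨hl, hBx, ?_⟩
  have hBB : B⁻¹ * B = 1 := Matrix.nonsing_inv_mul B hB
  have hBB' : B * B⁻¹ = 1 := Matrix.mul_nonsing_inv B hB
  have h1 : ((B⁻¹)ᵀ * B⁻¹) *ᵥ (B *ᵥ x) = (B⁻¹)ᵀ *ᵥ x := by
    rw [Matrix.mulVec_mulVec, Matrix.mul_assoc, hBB, Matrix.mul_one]
  have h2 : B *ᵥ x = l • ((B⁻¹)ᵀ *ᵥ x) := by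
    have := congrArg (fun v => (B⁻¹)ᵀ *ᵥ v) h
    simp only [Matrix.mulVec_smul] at this
    rw [Matrix.mulVec_mulVec, ← Matrix.mul_assoc, ← Matrix.transpose_mul, hBB',
      Matrix.transpose_one, Matrix.one_mul] at this
    exact this
  rw [h1]
  rw [h2]
  rw [smul_smul, inv_mul_cancel₀ hl.ne', one_smul]

/-- spectrum membership for a Hermitian real matrix ↔ existence of an eigenvector. -/
private lemma spec_iff (M : Matrix (Fin n) (Fin n) ℝ) (hM : M.IsHermitian) (μ : ℝ) :
    μ ∈ spectrum ℝ M ↔ ∃ x : Fin n → ℝ, x ≠ 0 ∧ M *ᵥ x = μ • x := by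
  rw [← Matrix.spectrum_toEuclideanLin (𝕜 := ℝ) (A := M), ← Module.End.hasEigenvalue_iff_mem_spectrum]
  constructor
  · intro h
    obtain ⟨v, hv⟩ := h.exists_hasEigenvector
    refine ⟨(WithLp.equiv 2 _ v : Fin n → ℝ), ?_, ?_⟩
    · simpa using hv.2
    · have := hv.apply_eq_smul
      have h2 := congrArg (fun w => (WithLp.equiv 2 (Fin n → ℝ)) w) this
      simpa [toEL_eq_mulVec] using h2
  · rintro ⟨x, hx0, hx⟩
    refine Module.End.hasEigenvalue_of_hasEigenvector
      (x := (WithLp.equiv 2 (Fin n → ℝ)).symm x) ⟨?_, by simpa using hx0⟩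
    rw [Module.End.mem_eigenspace_iff]
    apply (WithLp.equiv 2 (Fin n → ℝ)).injective
    simpa [toEL_eq_mulVec] using hx

end Aux

/-- Pointwise tangent-space version of Theorem 1(ii): if `ξ ≠ 0` is an eigenvector of the
forward Cauchy–Green tensor `Cᶠ = Aᵀ * A` for its smallest eigenvalue `lmin`, then there is a
nonzero eigenvector `η` of the backward Cauchy–Green tensor `Cᵇ = (A⁻¹)ᵀ * A⁻¹` for its
largest eigenvalue such that `A ((span ξ)ᗮ) = (span η)ᗮ`. -/
theorem forward_stretch_surface_is_backward_strain_surface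
    (n : ℕ) (A : Matrix (Fin n) (Fin n) ℝ) (hA : IsUnit A.det)
    (lmin : ℝ) (hmin : IsLeast (spectrum ℝ (Aᵀ * A)) lmin)
    (ξ : EuclideanSpace ℝ (Fin n)) (hξ0 : ξ ≠ 0)
    (hξ : Matrix.toEuclideanLin (Aᵀ * A) ξ = lmin • ξ) :
    ∃ (lmax : ℝ) (η : EuclideanSpace ℝ (Fin n)),
      IsGreatest (spectrum ℝ ((A⁻¹)ᵀ * A⁻¹)) lmax ∧ η ≠ 0 ∧
      Matrix.toEuclideanLin ((A⁻¹)ᵀ * A⁻¹) η = lmax • η ∧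
      Submodule.map (Matrix.toEuclideanLin A) ((ℝ ∙ ξ)ᗮ) = (ℝ ∙ η)ᗮ := by
  classical
  -- translate eigen-equation to mulVec
  set x : Fin n → ℝ := (WithLp.equiv 2 (Fin n → ℝ)) ξ with hxdef
  have hx0 : x ≠ 0 := by simpa [hxdef] using hξ0
  have hx : (Aᵀ * A) *ᵥ x = lmin • x := by
    have := congrArg (fun w => (WithLp.equiv 2 (Fin n → ℝ)) w) hξ
    simpa [toEL_eq_mulVec, hxdef] using this
  obtain ⟨hl, hAx, heig⟩ := key A hA lmin x hx0 hx
  -- symmetry facts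
  have herm_f : (Aᵀ * A).IsHermitian := by
    have := Matrix.isHermitian_conjTranspose_mul_self A
    rwa [Matrix.conjTranspose_eq_transpose_of_trivial] at this
  have hAinv : IsUnit (A⁻¹).det := Matrix.isUnit_nonsing_inv_det A hA
  have herm_b : ((A⁻¹)ᵀ * A⁻¹).IsHermitian := by
    have := Matrix.isHermitian_conjTranspose_mul_self A⁻¹
    rwa [Matrix.conjTranspose_eq_transpose_of_trivial] at this
  -- lmax
  refine ⟨lmin⁻¹, Matrix.toEuclideanLin A ξ, ⟨?_, ?_⟩, ?_, ?_, ?_⟩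
  · -- membership
    exact (spec_iff _ herm_b lmin⁻¹).2 ⟨A *ᵥ x, hAx, heig⟩
  · -- upper bound
    intro μ hμ
    obtain ⟨w, hw0, hw⟩ := (spec_iff _ herm_b μ).1 hμ
    have hAinvinv : A⁻¹⁻¹ = A := Matrix.nonsing_inv_nonsing_inv A hA
    obtain ⟨hμpos, hAw, heig'⟩ := key A⁻¹ hAinv μ w hw0 hw
    rw [hAinvinv] at heig'
    have hmem : μ⁻¹ ∈ spectrum ℝ (Aᵀ * A) :=
      (spec_iff _ herm_f μ⁻¹).2 ⟨A⁻¹ *ᵥ w, hAw, heig'⟩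
    have := hmin.2 hmem
    calc μ = (μ⁻¹)⁻¹ := by rw [inv_inv]
    _ ≤ lmin⁻¹ := by
      exact inv_anti₀ hl this
  · -- η ≠ 0
    intro h0
    apply hAx
    have := congrArg (fun w => (WithLp.equiv 2 (Fin n → ℝ)) w) h0
    simpa [toEL_eq_mulVec, hxdef] using this
  · -- eigen equation for η
    apply (WithLp.equiv 2 (Fin n → ℝ)).injective
    simpa [toEL_eq_mulVec, hxdef, Matrix.mul_assoc] using heig
  · -- subspace equality
    have hadj : Matrix.toEuclideanLin Aᵀ = LinearMap.adjoint (Matrix.toEuclideanLin A) := by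
      rw [← Matrix.conjTranspose_eq_transpose_of_trivial]
      exact Matrix.toEuclideanLin_conjTranspose_eq_adjoint A
    ext w
    simp only [Submodule.mem_map, Submodule.mem_orthogonal_singleton_iff_inner_right]
    constructor
    · rintro ⟨v, hv, rfl⟩
      have : (inner ℝ (Matrix.toEuclideanLin A ξ) (Matrix.toEuclideanLin A v) : ℝ) =
          inner ℝ (Matrix.toEuclideanLin (Aᵀ * A) ξ) v := by
        rw [toEL_mul, hadj, LinearMap.adjoint_inner_left]
      rw [this, hξ, inner_smul_left]
      simp [hv]
    · intro hw
      refine ⟨Matrix.toEuclideanLin A⁻¹ w, ?_, ?_⟩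
      · have h1 : (inner ℝ ξ (Matrix.toEuclideanLin A⁻¹ w) : ℝ) =
            inner ℝ (Matrix.toEuclideanLin (A⁻¹)ᵀ ξ) w := by
          rw [← Matrix.conjTranspose_eq_transpose_of_trivial,
            Matrix.toEuclideanLin_conjTranspose_eq_adjoint, LinearMap.adjoint_inner_left]
        have h2 : Matrix.toEuclideanLin (A⁻¹)ᵀ ξ = lmin⁻¹ • Matrix.toEuclideanLin A ξ := by
          apply (WithLp.equiv 2 (Fin n → ℝ)).injective
          have h3 : ((A⁻¹)ᵀ * A⁻¹) *ᵥ (A *ᵥ x) = (A⁻¹)ᵀ *ᵥ x := by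
            rw [Matrix.mulVec_mulVec, Matrix.mul_assoc, Matrix.nonsing_inv_mul A hA,
              Matrix.mul_one]
          have := heig
          rw [h3] at this
          simpa [toEL_eq_mulVec, hxdef] using this
        rw [h1, h2, inner_smul_left]
        simp [hw]
      · rw [← toEL_mul, Matrix.mul_nonsing_inv A hA]
        simp [Matrix.toEuclideanLin_apply]
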